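/- For all sufficiently small ε ∈ (0,1), one has g(−1/log ε)/g(ε − 1/log ε) ≥ exp((1/4) (log ε)²), where g(z) = exp(exp(1/z)). In particular this ratio tends to ∞ as ε → 0⁺. -/

import Mathlib

lemma keylem (ε : ℝ) (h0 : 0 < ε) (h1 : ε < Real.exp (-2)) :
    Real.exp ((1 / 4) * (Real.log ε) ^ 2) ≤
      Real.exp (Real.exp (1 / (-1 / Real.log ε))) /
        Real.exp (Real.exp (1 / (ε - 1 / Real.log ε))) := by
  set x : ℝ := -Real.log ε with hxdef
  have hlog : Real.log ε = -x := by rw [hxdef]; ring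
  have hx2 : 2 < x := by
    have := Real.log_lt_log h0 h1
    rw [Real.log_exp] at this
    linarith [hlog ▸ this]
  have hx0 : 0 < x := by linarith
  have hεx : ε = Real.exp (-x) := by rw [hxdef, neg_neg, Real.exp_log h0]
  clear_value x
  have hεe : ε * Real.exp x = 1 := by rw [hεx, ← Real.exp_add]; simp
  have hD : 0 < ε * x + 1 := by positivity
  have e1 : 1 / (-1 / Real.log ε) = x := by rw [hlog]; field_simp
  have hden : ε - 1 / Real.log ε = (ε * x + 1) / x := by
    rw [hlog, div_neg, sub_neg_eq_add, add_div, mul_div_cancel_right₀ _ hx0.ne']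
  have e2 : 1 / (ε - 1 / Real.log ε) = x / (ε * x + 1) := by
    rw [hden, one_div_div]
  rw [e1, e2, ← Real.exp_sub, Real.exp_le_exp, hlog]
  -- x² ≤ exp x
  have hx2e : x ^ 2 ≤ Real.exp x := by
    have h4 : Real.exp x = (Real.exp (x / 4)) ^ 4 := by
      rw [← Real.exp_nat_mul]; congr 1; push_cast; ring
    have hu : x / 4 + 1 ≤ Real.exp (x / 4) := Real.add_one_le_exp _
    have hu2 : x ≤ (Real.exp (x / 4)) ^ 2 := by nlinarith [sq_nonneg (x / 4 - 1)]
    nlinarith [hu2, hx0.le, mul_le_mul_of_nonneg_left hu2 hx0.le, sq_nonneg ((Real.exp (x/4))^2 - x)]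
  have hεx1 : ε * x ≤ 1 := by nlinarith [Real.add_one_le_exp x]
  set t : ℝ := ε * x ^ 2 / (ε * x + 1) with htdef
  have ht0 : 0 ≤ t := by positivity
  have ht1 : t ≤ 1 := by
    rw [htdef, div_le_one hD]
    nlinarith
  have hsub : x / (ε * x + 1) = x - t := by
    rw [htdef]; field_simp; ring
  rw [hsub, Real.exp_sub]
  have hhalf : Real.exp x / Real.exp t ≤ Real.exp x * (1 - t / 2) := by
    have h1 : t + 1 ≤ Real.exp t := Real.add_one_le_exp t
    have h2 : Real.exp x / Real.exp t ≤ Real.exp x / (t + 1) := by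
      apply div_le_div_of_nonneg_left (le_of_lt (Real.exp_pos x)) (by linarith) h1
    have h3 : Real.exp x / (t + 1) ≤ Real.exp x * (1 - t / 2) := by
      rw [div_le_iff₀ (by linarith : (0:ℝ) < t + 1)]
      have hE := Real.exp_pos x
      nlinarith [mul_nonneg hE.le (mul_nonneg ht0 (by linarith : (0:ℝ) ≤ 1 - t))]
    linarith
  -- now: (1/4) * (-x)^2 ≤ exp x - exp x * (1 - t/2) = exp x * t / 2 = x²/(2(εx+1)) ≥ x²/4
  have hfin : Real.exp x * t * (ε * x + 1) = Real.exp x * ε * x ^ 2 := by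
    rw [htdef]; field_simp
  have hex := Real.exp_pos x
  nlinarith [mul_le_mul_of_nonneg_left hεx1 (le_of_lt hex), sq_nonneg x]

theorem stmt13 :
    (∃ ε₀ : ℝ, 0 < ε₀ ∧ ε₀ < 1 ∧ ∀ ε : ℝ, 0 < ε → ε < ε₀ →
      Real.exp ((1 / 4) * (Real.log ε) ^ 2) ≤
        Real.exp (Real.exp (1 / (-1 / Real.log ε))) /
          Real.exp (Real.exp (1 / (ε - 1 / Real.log ε)))) ∧
    Filter.Tendsto
      (fun ε : ℝ =>
        Real.exp (Real.exp (1 / (-1 / Real.log ε))) /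
          Real.exp (Real.exp (1 / (ε - 1 / Real.log ε))))
      (nhdsWithin 0 (Set.Ioi 0)) Filter.atTop := by
  have hε₀ : (0:ℝ) < Real.exp (-2) := Real.exp_pos _
  have hε₁ : Real.exp (-2) < 1 := by
    rw [Real.exp_lt_one_iff]; norm_num
  constructor
  · exact ⟨Real.exp (-2), hε₀, hε₁, fun ε h0 h1 => keylem ε h0 h1⟩
  · apply Filter.tendsto_atTop_mono'
      (nhdsWithin 0 (Set.Ioi 0))
      (f₁ := fun ε : ℝ => Real.exp ((1 / 4) * (Real.log ε) ^ 2))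
    · have hmem : Set.Ioo (0:ℝ) (Real.exp (-2)) ∈ nhdsWithin 0 (Set.Ioi 0) :=
        Ioo_mem_nhdsGT_of_mem ⟨le_refl 0, hε₀⟩
      filter_upwards [hmem] with ε hε
      exact keylem ε hε.1 hε.2
    · apply Real.tendsto_exp_atTop.comp
      have h1 : Filter.Tendsto Real.log (nhdsWithin 0 (Set.Ioi 0)) Filter.atBot :=
        Real.tendsto_log_nhdsGT_zero
      have h2 : Filter.Tendsto (fun ε : ℝ => (Real.log ε) ^ 2) (nhdsWithin 0 (Set.Ioi 0))
          Filter.atTop := by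
        have h3 : Filter.Tendsto (fun y : ℝ => y ^ 2) Filter.atBot Filter.atTop := by
          apply Filter.tendsto_atTop.2
          intro b
          filter_upwards [Filter.eventually_le_atBot (-(|b| + 1))] with y hy
          nlinarith [le_abs_self b, abs_nonneg b, sq_nonneg (y + |b| + 1)]
        exact h3.comp h1
      exact h2.const_mul_atTop (by norm_num : (0:ℝ) < 1/4)
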